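/- The weighted Myerson value on restricted networks satisfies the recursion: for every network g, value function v, positive weights w, subset S ⊆ N, and i ∈ S, Y_i^{w-MV}(g|_S, v) = (1/Σ_{j∈S} w_j) [ w_i (v(g|_S) − v(g|_S \ g_i)) + Σ_{j∈S, j≠i} w_j Y_i^{w-MV}(g|_S \ g_j, v) ]. -/
import Mathlib


open Finset

variable {n : ℕ}

/-- A network on player set `Fin n`: a finite set of (unordered) links. -/
abbrev Network (n : ℕ) := Finset (Sym2 (Fin n))

/-- The set of non-isolated players of a network. -/
def players (g : Network n) : Finset (Fin n) :=
  Finset.univ.filter (fun i => ∃ e ∈ g, i ∈ e)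

/-- Harsanyi dividend of a value function at a network. -/
noncomputable def dividend (v : Network n → ℝ) (g' : Network n) : ℝ :=
  ∑ g'' ∈ g'.powerset, (-1 : ℝ) ^ (g'.card - g''.card) * v g''

/-- The weighted Myerson value. -/
noncomputable def wMV (w : Fin n → ℝ) (v : Network n → ℝ) (g : Network n) (i : Fin n) : ℝ :=
  ∑ g' ∈ g.powerset.filter (fun g' => i ∈ players g'),
    (w i / ∑ j ∈ players g', w j) * dividend v g'

/-- Connectivity of two players through links of `g`. -/
def connectedIn (g : Network n) (i j : Fin n) : Prop :=
  Relation.ReflTransGen (fun a b => s(a, b) ∈ g) i j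

open Classical in
/-- The component of `g` containing the link `e`. -/
noncomputable def component (g : Network n) (e : Sym2 (Fin n)) : Network n :=
  g.filter (fun e' => ∃ i ∈ e, ∃ j ∈ e', connectedIn g i j)

/-- The set of components (maximal connected subnetworks) of `g`. -/
noncomputable def components (g : Network n) : Finset (Network n) :=
  g.image (component g)

/-- Component additive value functions. -/
def componentAdditive (v : Network n → ℝ) : Prop :=
  ∀ g : Network n, v g = ∑ h ∈ components g, v h

open Classical in
/-- The restriction `g|_S` of a network to a coalition `S`. -/
noncomputable def restrict (g : Network n) (S : Finset (Fin n)) : Network n :=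
  g.filter (fun e => ∀ i ∈ e, i ∈ S)

/-- The set `g_i` of links of player `i` in `g`. -/
def glinks (g : Network n) (i : Fin n) : Network n :=
  g.filter (fun e => i ∈ e)

lemma sum_neg_one_pow_card_real {α : Type*} [DecidableEq α] (x : Finset α) :
    (∑ m ∈ x.powerset, (-1 : ℝ) ^ m.card) = if x = ∅ then 1 else 0 := by
  have h := @Finset.sum_powerset_neg_one_pow_card α _ x
  have h2 : ((∑ m ∈ x.powerset, (-1 : ℤ) ^ m.card : ℤ) : ℝ)
      = ∑ m ∈ x.powerset, (-1 : ℝ) ^ m.card := by push_cast; rfl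
  rw [← h2, h]
  split <;> norm_num

lemma inner_alt_sum {α : Type*} [DecidableEq α] {h g'' : Finset α} (hsub : g'' ⊆ h) :
    ∑ g' ∈ h.powerset.filter (fun g' => g'' ⊆ g'), (-1 : ℝ) ^ (g'.card - g''.card)
      = if g'' = h then 1 else 0 := by
  have hbij : ∑ g' ∈ h.powerset.filter (fun g' => g'' ⊆ g'), (-1 : ℝ) ^ (g'.card - g''.card)
      = ∑ t ∈ (h \ g'').powerset, (-1 : ℝ) ^ t.card := by
    refine Finset.sum_nbij' (fun g' => g' \ g'') (fun t => g'' ∪ t) ?_ ?_ ?_ ?_ ?_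
    · intro a ha
      rw [mem_filter, mem_powerset] at ha
      exact mem_powerset.2 (sdiff_subset_sdiff ha.1 le_rfl)
    · intro t ht
      rw [mem_powerset] at ht
      rw [mem_filter, mem_powerset]
      exact ⟨union_subset hsub (ht.trans sdiff_subset), subset_union_left⟩
    · intro a ha
      rw [mem_filter, mem_powerset] at ha
      exact union_sdiff_of_subset ha.2
    · intro t ht
      rw [mem_powerset] at ht
      exact union_sdiff_cancel_left (Disjoint.mono_right ht disjoint_sdiff)
    · intro a ha
      rw [mem_filter, mem_powerset] at ha
      rw [card_sdiff_of_subset ha.2]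
  rw [hbij, sum_neg_one_pow_card_real]
  by_cases hh : g'' = h
  · simp [hh]
  · rw [if_neg hh, if_neg (fun he => hh (le_antisymm hsub (sdiff_eq_empty_iff_subset.mp he)))]

lemma powerset_filter_subset {α : Type*} [DecidableEq α] {h g' : Finset α} (hg' : g' ⊆ h) :
    h.powerset.filter (fun a => a ⊆ g') = g'.powerset := by
  ext a
  simp only [mem_filter, mem_powerset]
  exact ⟨fun x => x.2, fun x => ⟨x.trans hg', x⟩⟩

lemma sum_dividend (v : Network n → ℝ) (h : Network n) :
    ∑ g' ∈ h.powerset, dividend v g' = v h := by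
  classical
  unfold dividend
  have step : ∀ g' ∈ h.powerset,
      ∑ g'' ∈ g'.powerset, (-1 : ℝ) ^ (g'.card - g''.card) * v g''
        = ∑ g'' ∈ h.powerset, if g'' ⊆ g' then (-1 : ℝ) ^ (g'.card - g''.card) * v g'' else 0 := by
    intro g' hg'
    rw [mem_powerset] at hg'
    rw [← sum_filter, powerset_filter_subset hg']
  rw [Finset.sum_congr rfl step, Finset.sum_comm]
  have step2 : ∀ g'' ∈ h.powerset,
      (∑ g' ∈ h.powerset, if g'' ⊆ g' then (-1 : ℝ) ^ (g'.card - g''.card) * v g'' else 0)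
        = (if g'' = h then 1 else 0) * v g'' := by
    intro g'' hg''
    rw [mem_powerset] at hg''
    rw [← sum_filter, ← sum_mul, inner_alt_sum hg'']
  rw [Finset.sum_congr rfl step2]
  simp only [ite_mul, one_mul, zero_mul, Finset.sum_ite_eq', mem_powerset]
  simp

lemma powerset_sdiff_glinks (G : Network n) (j : Fin n) :
    (G \ glinks G j).powerset = G.powerset.filter (fun g' => j ∉ players g') := by
  classical
  ext g'
  simp only [mem_powerset, mem_filter, players, glinks, Finset.mem_filter, Finset.mem_univ,
    true_and, subset_iff, mem_sdiff, not_exists]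
  constructor
  · intro hc
    refine ⟨fun e he => (hc he).1, ?_⟩
    rintro e ⟨he, hje⟩
    exact (hc he).2 ⟨(hc he).1, hje⟩
  · rintro ⟨hsub, hnot⟩ e he
    exact ⟨hsub he, fun hh => hnot e ⟨he, hh.2⟩⟩

lemma players_restrict_subset {g : Network n} {S : Finset (Fin n)} {g' : Network n}
    (hg' : g' ⊆ restrict g S) : players g' ⊆ S := by
  classical
  intro k hk
  simp only [players, mem_filter, mem_univ, true_and] at hk
  obtain ⟨e, he, hke⟩ := hk
  have h2 := hg' he
  simp only [_root_.restrict, mem_filter] at h2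
  exact h2.2 k hke


/-- Recursive formula for the weighted Myerson value on restricted networks. -/
theorem wMV_recursion_restricted (w : Fin n → ℝ) (hw : ∀ k, 0 < w k)
    (v : Network n → ℝ) (hv : v ∅ = 0) (g : Network n)
    (S : Finset (Fin n)) (i : Fin n) (hi : i ∈ S) :
    wMV w v (restrict g S) i = (1 / ∑ j ∈ S, w j) *
      (w i * (v (restrict g S) - v (restrict g S \ glinks (restrict g S) i)) +
        ∑ j ∈ S.erase i, w j * wMV w v (restrict g S \ glinks (restrict g S) j) i) := by
  classical
  set G := restrict g S with hG
  set A := G.powerset.filter (fun g' => i ∈ players g') with hA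
  have hWS : 0 < ∑ j ∈ S, w j := Finset.sum_pos (fun k _ => hw k) ⟨i, hi⟩
  have hAmem : ∀ g' ∈ A, g' ⊆ G ∧ i ∈ players g' := by
    intro g' hg'
    rw [hA, mem_filter, mem_powerset] at hg'
    exact hg'
  have hpos : ∀ g' ∈ A, 0 < ∑ k ∈ players g', w k := fun g' hg' =>
    Finset.sum_pos (fun k _ => hw k) ⟨i, (hAmem g' hg').2⟩
  -- step 1
  have h1 : v G - v (G \ glinks G i) = ∑ g' ∈ A, dividend v g' := by
    rw [← sum_dividend v G, ← sum_dividend v (G \ glinks G i), powerset_sdiff_glinks,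
      ← Finset.sum_filter_add_sum_filter_not G.powerset (fun g' => i ∈ players g') (dividend v),
      add_sub_cancel_right, hA]
  -- step 2
  have h2 : ∀ j, wMV w v (G \ glinks G j) i
      = ∑ g' ∈ A, (if j ∉ players g' then (w i / ∑ k ∈ players g', w k) * dividend v g' else 0) := by
    intro j
    rw [wMV, powerset_sdiff_glinks, filter_filter, ← sum_filter, hA, filter_filter]
    refine Finset.sum_congr ?_ fun _ _ => rfl
    ext g'
    simp [and_comm]
  -- step 3
  have h3 : ∑ j ∈ S.erase i, w j * wMV w v (G \ glinks G j) i
      = ∑ g' ∈ A, ((∑ j ∈ S, w j) - ∑ k ∈ players g', w k) *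
          ((w i / ∑ k ∈ players g', w k) * dividend v g') := by
    calc ∑ j ∈ S.erase i, w j * wMV w v (G \ glinks G j) i
        = ∑ j ∈ S.erase i, ∑ g' ∈ A,
            (if j ∉ players g' then w j * ((w i / ∑ k ∈ players g', w k) * dividend v g') else 0) := by
          refine Finset.sum_congr rfl fun j _ => ?_
          rw [h2 j, Finset.mul_sum]
          exact Finset.sum_congr rfl fun g' _ => by rw [mul_ite, mul_zero]
      _ = ∑ g' ∈ A, ∑ j ∈ S.erase i,
            (if j ∉ players g' then w j else 0) * ((w i / ∑ k ∈ players g', w k) * dividend v g') := by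
          rw [Finset.sum_comm]
          exact Finset.sum_congr rfl fun g' _ => Finset.sum_congr rfl fun j _ => by
            rw [ite_mul, zero_mul]
      _ = ∑ g' ∈ A, (∑ j ∈ (S.erase i).filter (fun j => j ∉ players g'), w j) *
            ((w i / ∑ k ∈ players g', w k) * dividend v g') := by
          refine Finset.sum_congr rfl fun g' _ => ?_
          rw [← Finset.sum_mul, ← Finset.sum_filter]
      _ = ∑ g' ∈ A, ((∑ j ∈ S, w j) - ∑ k ∈ players g', w k) *
            ((w i / ∑ k ∈ players g', w k) * dividend v g') := by
          refine Finset.sum_congr rfl fun g' hg' => ?_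
          obtain ⟨hsubG, hiP⟩ := hAmem g' hg'
          have hPS : players g' ⊆ S := players_restrict_subset hsubG
          have hfe : (S.erase i).filter (fun j => j ∉ players g')
              = S.filter (fun j => j ∉ players g') := by
            ext j
            simp only [mem_filter, mem_erase]
            constructor
            · rintro ⟨⟨_, hjS⟩, hjP⟩; exact ⟨hjS, hjP⟩
            · rintro ⟨hjS, hjP⟩
              exact ⟨⟨fun hji => hjP (hji ▸ hiP), hjS⟩, hjP⟩
          have hsplit : ∑ j ∈ S.filter (fun j => j ∈ players g'), w j
              + ∑ j ∈ S.filter (fun j => j ∉ players g'), w j = ∑ j ∈ S, w j :=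
            Finset.sum_filter_add_sum_filter_not S _ w
          have hfilt : S.filter (fun j => j ∈ players g') = players g' := by
            rw [Finset.filter_mem_eq_inter, Finset.inter_eq_right.mpr hPS]
          rw [hfe]
          rw [hfilt] at hsplit
          have : ∑ j ∈ S.filter (fun j => j ∉ players g'), w j
              = (∑ j ∈ S, w j) - ∑ k ∈ players g', w k := by linarith
          rw [this]
  -- assemble
  rw [wMV, ← hA, h1, h3, Finset.mul_sum, ← Finset.sum_add_distrib, Finset.mul_sum]
  refine Finset.sum_congr rfl fun g' hg' => ?_
  have hW := hpos g' hg'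
  have hW' : (∑ k ∈ players g', w k) ≠ 0 := ne_of_gt hW
  have hWS' : (∑ j ∈ S, w j) ≠ 0 := ne_of_gt hWS
  field_simp
  ring
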